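/- arXiv:2309.06790 — 5 statements merged into one kernel-verified Lean document; each statement's English description precedes it below -/
import Mathlib

section
/- Let φ : ℝ^m → ℝ^m be a C¹ map on Euclidean space with φ(0) = 0 and with injective derivative Dφ(0) at the origin. Then there exists ε > 0 such that for every unit vector z (‖z‖ = 1) and every t ∈ (0, ε), the inner product ⟨φ(t·z), Dφ(t·z)(z)⟩ is strictly positive. In particular each image ray t ↦ φ(t·z) crosses every sphere centered at the origin that it meets in this range transversely, so the image under φ of a radial cone is transverse to all sufficiently small spheres centered at the origin. -/
open scoped RealInnerProductSpace

set_option maxHeartbeats 1000000 in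
set_option synthInstance.maxHeartbeats 400000 in
/-- If `φ : ℝ^m → ℝ^m` is `C¹`, `φ(0) = 0` and `Dφ(0)` is injective, then there
is `ε > 0` such that for every unit vector `z` and every `t ∈ (0, ε)` the inner
product `⟪φ(t•z), Dφ(t•z)(z)⟫` is strictly positive: every image ray crosses the
concentric spheres it meets transversely. -/
theorem cone_transverse_to_small_spheres (m : ℕ)
    (φ : EuclideanSpace ℝ (Fin m) → EuclideanSpace ℝ (Fin m))
    (hφ : ContDiff ℝ 1 φ) (h0 : φ 0 = 0)
    (hinj : Function.Injective (fderiv ℝ φ 0)) :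
    ∃ ε > (0 : ℝ), ∀ z : EuclideanSpace ℝ (Fin m), ‖z‖ = 1 →
      ∀ t ∈ Set.Ioo (0 : ℝ) ε, 0 < ⟪φ (t • z), fderiv ℝ φ (t • z) z⟫ := by
  set A : EuclideanSpace ℝ (Fin m) →L[ℝ] EuclideanSpace ℝ (Fin m) := fderiv ℝ φ 0 with hA
  -- lower bound for A
  obtain ⟨K, hK0, hKA⟩ := (A : EuclideanSpace ℝ (Fin m) →ₗ[ℝ] EuclideanSpace ℝ (Fin m)).exists_antilipschitzWith
    (LinearMap.ker_eq_bot.mpr hinj)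
  set c : ℝ := (K : ℝ)⁻¹ with hc
  have hc0 : 0 < c := inv_pos.mpr hK0
  have hAc : ∀ v : EuclideanSpace ℝ (Fin m), c * ‖v‖ ≤ ‖A v‖ := by
    intro v
    have h := hKA.le_mul_dist v 0
    simp only [dist_eq_norm, map_zero, sub_zero] at h
    rw [hc, inv_mul_le_iff₀ (by exact_mod_cast hK0 : (0:ℝ) < (K:ℝ))]
    exact h
  -- choose η
  set η : ℝ := c ^ 2 / (2 * (2 * ‖A‖ + c + 1)) with hη
  have hden : 0 < 2 * (2 * ‖A‖ + c + 1) := by positivity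
  have hη0 : 0 < η := by positivity
  have hηc : η ≤ c := by
    rw [hη, div_le_iff₀ hden]
    nlinarith [norm_nonneg A]
  have hkey : 2 * η * ‖A‖ + η ^ 2 < c ^ 2 := by
    have : η * (2 * ‖A‖ + η) ≤ η * (2 * ‖A‖ + c) := by nlinarith
    have h2 : η * (2 * (2 * ‖A‖ + c + 1)) = c ^ 2 := by
      rw [hη]; field_simp
    nlinarith [norm_nonneg A]
  -- continuity of fderiv at 0
  have hcont : ContinuousAt (fun x => fderiv ℝ φ x) 0 :=
    (hφ.continuous_fderiv one_ne_zero).continuousAt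
  obtain ⟨δ, hδ0, hδ⟩ := Metric.continuousAt_iff.mp hcont η hη0
  refine ⟨δ, hδ0, ?_⟩
  intro z hz t ht
  obtain ⟨ht0, htδ⟩ := ht
  set x : EuclideanSpace ℝ (Fin m) := t • z with hx
  have hxnorm : ‖x‖ = t := by
    rw [hx, norm_smul, hz, Real.norm_eq_abs, abs_of_pos ht0, mul_one]
  have hxball : ∀ y : EuclideanSpace ℝ (Fin m), ‖y‖ < δ → ‖fderiv ℝ φ y - A‖ ≤ η := by
    intro y hy
    have : dist y 0 < δ := by simpa [dist_eq_norm] using hy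
    have := hδ this
    rw [dist_eq_norm] at this
    exact this.le
  -- bound on error in derivative at x
  have hxδ : ‖x‖ < δ := by rw [hxnorm]; exact htδ
  have he2 : ‖fderiv ℝ φ x z - A z‖ ≤ η := by
    calc ‖fderiv ℝ φ x z - A z‖ = ‖(fderiv ℝ φ x - A) z‖ := by
          simp [ContinuousLinearMap.sub_apply]
      _ ≤ ‖fderiv ℝ φ x - A‖ * ‖z‖ := (fderiv ℝ φ x - A).le_opNorm z
      _ ≤ η := by rw [hz, mul_one]; exact hxball x hxδ
  -- mean value bound : ‖φ x - A x‖ ≤ η * ‖x‖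
  have hdiff : Differentiable ℝ φ := hφ.differentiable one_ne_zero
  have hmv : ‖φ x - A x‖ ≤ η * ‖x‖ := by
    have hg : ∀ y ∈ Metric.ball (0 : EuclideanSpace ℝ (Fin m)) δ,
        DifferentiableAt ℝ (fun y => φ y - A y) y :=
      fun y _ => (hdiff y).sub (A.differentiable.differentiableAt)
    have hbound : ∀ y ∈ Metric.ball (0 : EuclideanSpace ℝ (Fin m)) δ,
        ‖fderiv ℝ (fun y => φ y - A y) y‖ ≤ η := by
      intro y hy
      have hfd : fderiv ℝ (fun y => φ y - A y) y = fderiv ℝ φ y - A := by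
        rw [fderiv_fun_sub (hdiff y) A.differentiable.differentiableAt, A.fderiv]
      rw [hfd]
      exact hxball y (by simpa [dist_eq_norm] using hy)
    have h0mem : (0 : EuclideanSpace ℝ (Fin m)) ∈ Metric.ball (0 : EuclideanSpace ℝ (Fin m)) δ := by
      simpa using hδ0
    have hxmem : x ∈ Metric.ball (0 : EuclideanSpace ℝ (Fin m)) δ := by
      simpa [dist_eq_norm] using hxδ
    have := Convex.norm_image_sub_le_of_norm_fderiv_le hg hbound (convex_ball 0 δ) h0mem hxmem
    simpa [h0] using this
  -- now the inner product estimate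
  set e1 : EuclideanSpace ℝ (Fin m) := φ x - A x with he1def
  set e2 : EuclideanSpace ℝ (Fin m) := fderiv ℝ φ x z - A z with he2def
  have hφx : φ x = t • A z + e1 := by
    rw [he1def]; rw [hx]; rw [map_smul]; abel
  have hDz : fderiv ℝ φ x z = A z + e2 := by rw [he2def]; abel
  have he1 : ‖e1‖ ≤ η * t := by rw [he1def, ← hxnorm]; exact hmv
  have hAz : c ≤ ‖A z‖ := by have := hAc z; rwa [hz, mul_one] at this
  have hAzn : ‖A z‖ ≤ ‖A‖ := by
    have := A.le_opNorm z; rwa [hz, mul_one] at this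
  rw [hφx, hDz]
  have expand : ⟪t • A z + e1, A z + e2⟫ =
      t * ⟪A z, A z⟫ + t * ⟪A z, e2⟫ + ⟪e1, A z⟫ + ⟪e1, e2⟫ := by
    simp [inner_add_add_self, inner_add_left, inner_add_right, inner_smul_left,
      inner_smul_right]
    ring
  rw [expand]
  have h1 : ⟪A z, A z⟫ = ‖A z‖ ^ 2 := real_inner_self_eq_norm_sq (A z)
  have h2 : |⟪A z, e2⟫| ≤ ‖A‖ * η := by
    calc |⟪A z, e2⟫| ≤ ‖A z‖ * ‖e2‖ := abs_real_inner_le_norm _ _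
      _ ≤ ‖A‖ * η := mul_le_mul hAzn he2 (norm_nonneg _) (norm_nonneg _)
  have h3 : |⟪e1, A z⟫| ≤ (η * t) * ‖A‖ := by
    calc |⟪e1, A z⟫| ≤ ‖e1‖ * ‖A z‖ := abs_real_inner_le_norm _ _
      _ ≤ (η * t) * ‖A‖ := mul_le_mul he1 hAzn (norm_nonneg _) (by positivity)
  have h4 : |⟪e1, e2⟫| ≤ (η * t) * η := by
    calc |⟪e1, e2⟫| ≤ ‖e1‖ * ‖e2‖ := abs_real_inner_le_norm _ _
      _ ≤ (η * t) * η := mul_le_mul he1 he2 (norm_nonneg _) (by positivity)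
  have hcAz : c ^ 2 ≤ ‖A z‖ ^ 2 := by nlinarith
  have habs2 := abs_le.mp h2
  have habs3 := abs_le.mp h3
  have habs4 := abs_le.mp h4
  nlinarith [habs2.1, habs3.1, habs4.1, hcAz, ht0, hkey,
    mul_pos ht0 (sub_pos.mpr hkey)]
end

section
/- Let φ : ℝ^m → ℝ^m be strictly differentiable at a point x with derivative a continuous linear equivalence D : ℝ^m ≃L[ℝ] ℝ^m (HasStrictFDerivAt φ D x). Then for every set s ⊆ ℝ^m there exists a neighborhood V of x such that tangentConeAt ℝ (φ '' (s ∩ V)) (φ x) = D '' (tangentConeAt ℝ s x): the tangent cone of the image of s under φ at φ(x) is the image of the tangent cone of s at x under the derivative D. -/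
open Filter Asymptotics Topology

/-- If `f` has derivative `f'` at `x`, then `f'` maps the tangent cone of `s` at `x`
into the tangent cone of `f '' s` at `f x`. -/
theorem aux_mapsTo_tangentCone {E F : Type*} [NormedAddCommGroup E] [NormedSpace ℝ E]
    [NormedAddCommGroup F] [NormedSpace ℝ F] {f : E → F} {f' : E →L[ℝ] F} {x : E}
    (hf : HasFDerivAt f f' x) {s : Set E} {y : E} (hy : y ∈ tangentConeAt ℝ s x) :
    f' y ∈ tangentConeAt ℝ (f '' s) (f x) := by
  obtain ⟨c, d, ctop, ds, clim⟩ := mem_tangentConeAt_iff_exists_seq_norm_tendsto_atTop.1 hy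
  refine mem_tangentConeAt_iff_exists_seq_norm_tendsto_atTop.2 ⟨c, fun n => f (x + d n) - f x, ctop, ?_, ?_⟩
  · exact ds.mono fun n hn => ⟨x + d n, hn, by simp⟩
  · have hd0 : Tendsto d atTop (𝓝 0) := tangentConeAt.lim_zero atTop ctop clim
    have hdx : Tendsto (fun n => x + d n) atTop (𝓝 x) := by
      simpa using tendsto_const_nhds.add hd0
    -- the error term
    have hlo : (fun n => f (x + d n) - f x - f' (d n)) =o[atTop] d := by
      have := (hasFDerivAt_iff_isLittleO_nhds_zero.1 hf)
      exact this.comp_tendsto hd0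
    have hsm : (fun n => c n • (f (x + d n) - f x - f' (d n))) =o[atTop]
        (fun n => c n • d n) := (isBigO_refl c atTop).smul_isLittleO hlo
    have h0 : Tendsto (fun n => c n • (f (x + d n) - f x - f' (d n))) atTop (𝓝 0) := by
      rw [← isLittleO_one_iff ℝ]
      exact hsm.trans_isBigO (clim.isBigO_one ℝ)
    have h1 : Tendsto (fun n => f' (c n • d n)) atTop (𝓝 (f' y)) :=
      (f'.continuous.tendsto y).comp clim
    have : Tendsto (fun n => c n • (f (x + d n) - f x - f' (d n)) + f' (c n • d n))
        atTop (𝓝 (0 + f' y)) := h0.add h1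
    rw [zero_add] at this
    refine this.congr fun n => ?_
    simp [smul_sub, map_smul]

/-- If `φ : ℝ^m → ℝ^m` is strictly differentiable at `x` with invertible
derivative `D`, then for every set `s` there is a neighborhood `V` of `x` such
that the tangent cone of `φ '' (s ∩ V)` at `φ x` is the image under `D` of the
tangent cone of `s` at `x`. -/
theorem tangentCone_image_of_hasStrictFDerivAt (m : ℕ)
    (φ : EuclideanSpace ℝ (Fin m) → EuclideanSpace ℝ (Fin m))
    (x : EuclideanSpace ℝ (Fin m))
    (D : EuclideanSpace ℝ (Fin m) ≃L[ℝ] EuclideanSpace ℝ (Fin m))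
    (hφ : HasStrictFDerivAt φ (D : EuclideanSpace ℝ (Fin m) →L[ℝ]
      EuclideanSpace ℝ (Fin m)) x)
    (s : Set (EuclideanSpace ℝ (Fin m))) :
    ∃ V ∈ nhds x,
      tangentConeAt ℝ (φ '' (s ∩ V)) (φ x) = ⇑D '' tangentConeAt ℝ s x := by
  set F := hφ.toOpenPartialHomeomorph φ with hF
  have hxF : x ∈ F.source := hφ.mem_toOpenPartialHomeomorph_source
  have hVnhds : F.source ∈ nhds x := F.open_source.mem_nhds hxF
  refine ⟨F.source, hVnhds, ?_⟩
  have hinter : tangentConeAt ℝ (s ∩ F.source) x = tangentConeAt ℝ s x :=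
    tangentConeAt_inter_nhds hVnhds
  apply Set.Subset.antisymm
  · -- reverse inclusion via local inverse
    intro y hy
    have hψ : HasStrictFDerivAt (hφ.localInverse φ _ _)
        (D.symm : EuclideanSpace ℝ (Fin m) →L[ℝ] EuclideanSpace ℝ (Fin m)) (φ x) :=
      hφ.to_localInverse
    have h1 := aux_mapsTo_tangentCone hψ.hasFDerivAt hy
    have himg : hφ.localInverse φ _ _ '' (φ '' (s ∩ F.source)) = s ∩ F.source := by
      have : φ '' (s ∩ F.source) = F '' (s ∩ F.source) := by
        rw [hφ.toOpenPartialHomeomorph_coe]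
      rw [this, hφ.localInverse_def]
      exact F.symm_image_image_of_subset_source Set.inter_subset_right
    rw [hφ.localInverse_apply_image, himg, hinter] at h1
    exact ⟨D.symm y, h1, by simp⟩
  · -- forward inclusion
    rintro _ ⟨z, hz, rfl⟩
    rw [← hinter] at hz
    exact aux_mapsTo_tangentCone hφ.hasFDerivAt hz
end

section
/- Let x : ℝ → ℝ^k be a C¹ curve into Euclidean space with x(0) = 0 and x'(0) ≠ 0. Then the radius function N(s) = ‖x(s)‖ is differentiable from the right at 0 with derivative ‖x'(0)‖ (HasDerivWithinAt N ‖x'(0)‖ (Ici 0) 0), and there exists δ > 0 such that N is continuously differentiable on [0, δ): for s ∈ (0, δ) its derivative equals ⟨x(s)/‖x(s)‖, x'(s)⟩, and this derivative tends to ‖x'(0)‖ as s → 0⁺. -/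
open scoped RealInnerProductSpace

/-- If `x : ℝ → ℝ^k` is a `C¹` curve with `x 0 = 0` and `x' 0 ≠ 0`, then the
radius function `N s = ‖x s‖` has right derivative `‖x' 0‖` at `0`, and, on
some interval `[0, δ)`, `N` is `C¹`: for `s ∈ (0, δ)` its derivative equals
`⟪x s / ‖x s‖, x' s⟫`, and this derivative tends to `‖x' 0‖` as `s → 0⁺`. -/
theorem radius_function_C1_up_to_boundary (k : ℕ)
    (x : ℝ → EuclideanSpace ℝ (Fin k)) (hx : ContDiff ℝ 1 x)
    (h0 : x 0 = 0) (h0' : deriv x 0 ≠ 0)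
    (N : ℝ → ℝ) (hN : N = fun s => ‖x s‖) :
    HasDerivWithinAt N ‖deriv x 0‖ (Set.Ici 0) 0 ∧
    ∃ δ > (0 : ℝ),
      (∀ s ∈ Set.Ioo (0 : ℝ) δ,
        HasDerivAt N ⟪(‖x s‖)⁻¹ • x s, deriv x s⟫ s) ∧
      Filter.Tendsto (fun s => ⟪(‖x s‖)⁻¹ • x s, deriv x s⟫)
        (nhdsWithin 0 (Set.Ioi 0)) (nhds ‖deriv x 0‖) := by
  have hd : Differentiable ℝ x := hx.differentiable one_ne_zero
  have hc : Continuous (deriv x) := hx.continuous_deriv le_rfl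
  -- the rescaled curve s⁻¹ • x s tends to deriv x 0 as s → 0⁺
  have hslope : Filter.Tendsto (fun s : ℝ => s⁻¹ • x s)
      (nhdsWithin 0 (Set.Ioi 0)) (nhds (deriv x 0)) := by
    have h1 := (hd 0).hasDerivAt
    rw [hasDerivAt_iff_tendsto_slope] at h1
    have hsub : Set.Ioi (0 : ℝ) ⊆ {(0 : ℝ)}ᶜ := by
      intro s hs
      exact Set.mem_compl_singleton_iff.mpr (ne_of_gt hs)
    have h2 : Filter.Tendsto (slope x 0) (nhdsWithin 0 (Set.Ioi 0)) (nhds (deriv x 0)) :=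
      h1.mono_left (nhdsWithin_mono _ hsub)
    refine h2.congr (fun s => ?_)
    simp [slope, h0]
  -- eventually x s ≠ 0 for s > 0 near 0
  have hne : ∀ᶠ s in nhdsWithin 0 (Set.Ioi 0), x s ≠ 0 := by
    filter_upwards [hslope.eventually_ne h0', self_mem_nhdsWithin] with s h1 h2
    intro h
    apply h1
    simp [h]
  obtain ⟨δ, hδ, hδne⟩ : ∃ δ > (0 : ℝ), ∀ s ∈ Set.Ioo (0 : ℝ) δ, x s ≠ 0 := by
    rw [Filter.eventually_iff, mem_nhdsGT_iff_exists_Ioo_subset] at hne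
    obtain ⟨u, hu, hsub⟩ := hne
    exact ⟨u, hu, fun s hs => hsub hs⟩
  constructor
  · -- right derivative at 0
    rw [hasDerivWithinAt_iff_tendsto_slope]
    have hIci : Set.Ici (0 : ℝ) \ {0} = Set.Ioi 0 := by
      ext s; simp [Set.mem_diff, lt_iff_le_and_ne, eq_comm, and_comm]
    rw [hIci]
    have : Filter.Tendsto (fun s : ℝ => ‖s⁻¹ • x s‖) (nhdsWithin 0 (Set.Ioi 0))
        (nhds ‖deriv x 0‖) := hslope.norm
    refine this.congr' ?_
    filter_upwards [self_mem_nhdsWithin] with s hs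
    have hs0 : (0 : ℝ) < s := hs
    rw [slope, hN]
    simp only [h0, norm_zero, sub_zero, vsub_eq_sub]
    rw [norm_smul, Real.norm_eq_abs, abs_inv, abs_of_pos hs0, smul_eq_mul]
  · refine ⟨δ, hδ, ?_, ?_⟩
    · intro s hs
      have hxs : x s ≠ 0 := hδne s hs
      have hns : ‖x s‖ ≠ 0 := norm_ne_zero_iff.mpr hxs
      have hq0 : ⟪x s, x s⟫ ≠ 0 := inner_self_ne_zero.mpr hxs
      have h1 := (hd s).hasDerivAt
      have hq := h1.inner ℝ h1
      have hsqrt := (Real.hasDerivAt_sqrt hq0).comp s hq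
      have hNeq : N = fun t => Real.sqrt ⟪x t, x t⟫ := by
        rw [hN]; funext t; exact norm_eq_sqrt_real_inner (x t)
      rw [hNeq]
      convert hsqrt using 1
      case e'_4 => rfl
      case e'_5 => rfl
      case e'_8 => rfl
      rw [real_inner_smul_left, ← norm_eq_sqrt_real_inner,
        real_inner_comm (deriv x s) (x s)]
      field_simp
      ring
    · -- the derivative tends to ‖deriv x 0‖ as s → 0⁺
      have hn0 : ‖deriv x 0‖ ≠ 0 := norm_ne_zero_iff.mpr h0'
      have hderiv : Filter.Tendsto (deriv x) (nhdsWithin 0 (Set.Ioi 0))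
          (nhds (deriv x 0)) := (hc.tendsto 0).mono_left nhdsWithin_le_nhds
      have hunit : Filter.Tendsto (fun s : ℝ => ‖s⁻¹ • x s‖⁻¹ • (s⁻¹ • x s))
          (nhdsWithin 0 (Set.Ioi 0)) (nhds (‖deriv x 0‖⁻¹ • deriv x 0)) :=
        (hslope.norm.inv₀ hn0).smul hslope
      have hinner := Filter.Tendsto.inner (𝕜 := ℝ) hunit hderiv
      have hval : ⟪‖deriv x 0‖⁻¹ • deriv x 0, deriv x 0⟫ = ‖deriv x 0‖ := by
        rw [real_inner_smul_left, real_inner_self_eq_norm_sq]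
        field_simp
      rw [hval] at hinner
      refine hinner.congr' ?_
      filter_upwards [self_mem_nhdsWithin, hne] with s hs hxs
      have hs0 : (0 : ℝ) < s := hs
      have hns : ‖x s‖ ≠ 0 := norm_ne_zero_iff.mpr hxs
      congr 1
      rw [norm_smul, Real.norm_eq_abs, abs_inv, abs_of_pos hs0, smul_smul]
      congr 1
      field_simp
end

section
/- Fix integers k, m ≥ 1 and reals r, ρ > 0. Let γ(s) = (x(s), y(s)) : ℝ → ℝ^k × ℝ^m be a C¹ curve with x(0) = 0, x'(0) ≠ 0, and ‖y(s)‖ = r for all s ≥ 0. Define the transferred curve η(s) := (‖x(s)‖/ρ) • y(s) ∈ ℝ^m, which records the fiber coordinate at which the flow line of the Morse-model flow Φ_t(x, y) = (e^t x, e^{−t} y) through γ(s) crosses the set {‖x‖ = ρ}. Then η is differentiable from the right at 0 with derivative (‖x'(0)‖/ρ) • y(0), i.e. HasDerivWithinAt η ((‖x'(0)‖/ρ) • y(0)) (Ici 0) 0. In particular the tangent direction at 0 of the transferred curve is the radial direction through y(0), independently of y'(0). -/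
open Set Filter Topology

lemma norm_right_deriv {E : Type*} [NormedAddCommGroup E] [NormedSpace ℝ E]
    {x : ℝ → E} {v : E} (hx : HasDerivAt x v 0) (h0 : x 0 = 0) :
    HasDerivWithinAt (fun s => ‖x s‖) ‖v‖ (Set.Ici 0) 0 := by
  rw [hasDerivWithinAt_iff_tendsto_slope]
  have hx' := hasDerivAt_iff_tendsto_slope.mp hx
  have h1 : Tendsto (fun s => ‖slope x 0 s‖) (𝓝[Set.Ici 0 \ {0}] 0) (𝓝 ‖v‖) := by
    exact (continuous_norm.continuousAt.tendsto.comp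
      (hx'.mono_left (nhdsWithin_mono _ (by intro s hs; exact hs.2))))
  refine h1.congr' ?_
  filter_upwards [self_mem_nhdsWithin] with s hs
  have hspos : 0 < s := lt_of_le_of_ne hs.1 (Ne.symm hs.2)
  simp only [slope_def_field, slope, vsub_eq_sub, h0, sub_zero, norm_smul]
  rw [norm_inv, Real.norm_eq_abs, abs_of_pos hspos]
  simp [smul_eq_mul]

/-- One-curve version of the "Magic Fact" of the Morse model: for a `C¹` curve
`γ(s) = (x(s), y(s))` in `ℝ^k × ℝ^m` with `x(0) = 0`, `x'(0) ≠ 0` and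
`‖y(s)‖ = r` for `s ≥ 0`, the transferred curve `η(s) = (‖x(s)‖/ρ) • y(s)` has
right derivative `(‖x'(0)‖/ρ) • y(0)` at `0`: its tangent direction is the
radial direction through `y(0)`, independently of `y'(0)`. -/
theorem magic_fact_one_curve (k m : ℕ) (hk : 1 ≤ k) (hm : 1 ≤ m)
    (r ρ : ℝ) (hr : 0 < r) (hρ : 0 < ρ)
    (γ : ℝ → EuclideanSpace ℝ (Fin k) × EuclideanSpace ℝ (Fin m))
    (hγ : ContDiff ℝ 1 γ)
    (hx0 : (γ 0).1 = 0)
    (hx0' : deriv (fun s => (γ s).1) 0 ≠ 0)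
    (hy : ∀ s : ℝ, 0 ≤ s → ‖(γ s).2‖ = r)
    (η : ℝ → EuclideanSpace ℝ (Fin m))
    (hη : η = fun s => (‖(γ s).1‖ / ρ) • (γ s).2) :
    HasDerivWithinAt η ((‖deriv (fun s => (γ s).1) 0‖ / ρ) • (γ 0).2)
      (Set.Ici 0) 0 := by
  have hγd := hγ.differentiable one_ne_zero
  have hxd : DifferentiableAt ℝ (fun s => (γ s).1) 0 := (hγd 0).fst
  have hyd : DifferentiableAt ℝ (fun s => (γ s).2) 0 := (hγd 0).snd
  have hf : HasDerivWithinAt (fun s => ‖(γ s).1‖ / ρ)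
      (‖deriv (fun s => (γ s).1) 0‖ / ρ) (Set.Ici 0) 0 :=
    (norm_right_deriv hxd.hasDerivAt hx0).div_const ρ
  have hyw : HasDerivWithinAt (fun s => (γ s).2)
      (deriv (fun s => (γ s).2) 0) (Set.Ici 0) 0 :=
    hyd.hasDerivAt.hasDerivWithinAt
  have this : HasDerivWithinAt (fun s => (‖(γ s).1‖ / ρ) • (γ s).2) _ (Set.Ici 0) 0 :=
    hf.smul hyw
  rw [hη]
  convert this using 1
  simp [hx0]
end

section
/- Let φ : ℝ → Homeo(ℝⁿ) be a one-parameter group of C¹ diffeomorphisms of ℝⁿ: φ(0) is the identity, φ(s + t) = φ(s) ∘ φ(t) for all s, t ∈ ℝ, and for every t both φ(t) and its inverse are C¹ maps. Let f : ℝ^a → ℝⁿ be a C¹ map and S ⊆ ℝⁿ a set. Call a C¹ map g : ℝ^a → ℝⁿ transverse to a set U if for every point a with g(a) ∈ U, the linear span of range(Dg(a)) ∪ tangentConeAt ℝ U (g(a)) is all of ℝⁿ. Assume there is ε > 0 such that φ(s) ∘ f is transverse to S for every s ∈ (0, ε). Then for all 0 < t₁ < t₂ < ε and every t ∈ [0,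 t₁], the map φ(t₂) ∘ f is transverse to the set φ(t)(S) (the image of S under φ(t)). -/
/-- A `C¹` map `g : ℝ^a → ℝⁿ` is transverse to a set `U ⊆ ℝⁿ` if at every
point sent into `U`, the range of the derivative of `g` together with the
tangent cone of `U` spans all of `ℝⁿ`. -/
def IsTransverseTo {a n : ℕ}
    (g : EuclideanSpace ℝ (Fin a) → EuclideanSpace ℝ (Fin n))
    (U : Set (EuclideanSpace ℝ (Fin n))) : Prop :=
  ∀ p, g p ∈ U →
    Submodule.span ℝ
      (Set.range ⇑(fderiv ℝ g p) ∪ tangentConeAt ℝ U (g p)) = ⊤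

/-- Formula (3.2) of the paper: if a one-parameter group `φ` of `C¹`
diffeomorphisms makes the `C¹` map `f` immediately transverse to `S` (that is,
`φ s ∘ f ⋔ S` for all `s ∈ (0, ε)`), then for all `0 < t₁ < t₂ < ε` and every
`t ∈ [0, t₁]`, the map `φ t₂ ∘ f` is transverse to `φ t '' S`. -/
theorem transverse_to_one_parameter_family (a n : ℕ)
    (φ : ℝ → EuclideanSpace ℝ (Fin n) → EuclideanSpace ℝ (Fin n))
    (hφ0 : φ 0 = id)
    (hgrp : ∀ s t : ℝ, φ (s + t) = φ s ∘ φ t)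
    (hC1 : ∀ t : ℝ, ContDiff ℝ 1 (φ t))
    (hbij : ∀ t : ℝ, Function.Bijective (φ t))
    (hinvC1 : ∀ t : ℝ, ∃ ψ : EuclideanSpace ℝ (Fin n) → EuclideanSpace ℝ (Fin n),
      ContDiff ℝ 1 ψ ∧ Function.LeftInverse ψ (φ t) ∧ Function.RightInverse ψ (φ t))
    (f : EuclideanSpace ℝ (Fin a) → EuclideanSpace ℝ (Fin n))
    (hf : ContDiff ℝ 1 f)
    (S : Set (EuclideanSpace ℝ (Fin n)))
    (ε : ℝ) (hε : 0 < ε)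
    (htrans : ∀ s ∈ Set.Ioo (0 : ℝ) ε, IsTransverseTo (φ s ∘ f) S) :
    ∀ t₁ t₂ : ℝ, 0 < t₁ → t₁ < t₂ → t₂ < ε → ∀ t ∈ Set.Icc (0 : ℝ) t₁,
      IsTransverseTo (φ t₂ ∘ f) (φ t '' S) := by
  intro t₁ t₂ ht₁ h12 h2ε t ht p hp
  obtain ⟨ht0, htt1⟩ := ht
  set s : ℝ := t₂ - t with hs
  have hs0 : 0 < s := by simp only [hs]; linarith
  have hsε : s < ε := by simp only [hs]; linarith
  set g := φ s ∘ f with hg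
  have hkey : φ t₂ ∘ f = φ t ∘ g := by
    rw [hg, ← Function.comp_assoc, ← hgrp]
    congr 1
    simp [hs]
  have hgC1 : ContDiff ℝ 1 g := (hC1 s).comp hf
  have hgd : DifferentiableAt ℝ g p := (hgC1.differentiable one_ne_zero).differentiableAt
  have hφtd : ∀ x, DifferentiableAt ℝ (φ t) x :=
    fun x => ((hC1 t).differentiable one_ne_zero).differentiableAt
  have hgpS : g p ∈ S := by
    obtain ⟨y, hyS, hy⟩ := hp
    have h1 : φ t y = φ t (g p) := by
      rw [hy]; exact congrFun hkey p
    have h2 : y = g p := (hbij t).1 h1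
    rwa [← h2]
  have hspan := htrans s ⟨hs0, hsε⟩ p hgpS
  set A := fderiv ℝ (φ t) (g p) with hA
  obtain ⟨ψ, hψC1, hl, hr⟩ := hinvC1 t
  have hψd : ∀ x, DifferentiableAt ℝ ψ x :=
    fun x => (hψC1.differentiable one_ne_zero).differentiableAt
  have hAsurj : Function.Surjective ⇑A := by
    intro v
    refine ⟨fderiv ℝ ψ (φ t (g p)) v, ?_⟩
    have hid : φ t ∘ ψ = id := funext hr
    have h2 : fderiv ℝ (φ t ∘ ψ) (φ t (g p)) =
        (fderiv ℝ (φ t) (ψ (φ t (g p)))).comp (fderiv ℝ ψ (φ t (g p))) :=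
      fderiv_comp _ (hφtd _) (hψd _)
    rw [hl (g p)] at h2
    rw [hid, fderiv_id] at h2
    have := congrArg (fun L : _ →L[ℝ] _ => L v) h2
    simpa using this.symm
  have hTC : Set.MapsTo ⇑A (tangentConeAt ℝ S (g p))
      (tangentConeAt ℝ (φ t '' S) (φ t (g p))) :=
    ((hφtd (g p)).hasFDerivAt.hasFDerivWithinAt).mapsTo_tangent_cone
  have hpt : (φ t₂ ∘ f) p = φ t (g p) := congrFun hkey p
  have hD : fderiv ℝ (φ t₂ ∘ f) p = A.comp (fderiv ℝ g p) := by
    rw [hkey]; exact fderiv_comp p (hφtd _) hgd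
  rw [hpt, hD]
  apply top_unique
  have himg : Submodule.span ℝ
      (⇑A '' (Set.range ⇑(fderiv ℝ g p) ∪ tangentConeAt ℝ S (g p))) = ⊤ := by
    rw [show (⇑A '' (Set.range ⇑(fderiv ℝ g p) ∪ tangentConeAt ℝ S (g p)))
        = ⇑(A : _ →ₗ[ℝ] _) '' (Set.range ⇑(fderiv ℝ g p) ∪ tangentConeAt ℝ S (g p)) from rfl,
      Submodule.span_image, hspan, Submodule.map_top, LinearMap.range_eq_top]
    exact hAsurj
  calc (⊤ : Submodule ℝ (EuclideanSpace ℝ (Fin n)))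
      = Submodule.span ℝ (⇑A '' (Set.range ⇑(fderiv ℝ g p) ∪ tangentConeAt ℝ S (g p))) :=
        himg.symm
    _ ≤ _ := by
        apply Submodule.span_mono
        rw [Set.image_union]
        apply Set.union_subset_union
        · rw [← Set.range_comp]; exact Set.Subset.rfl
        · exact Set.mapsTo_iff_image_subset.mp hTC
end
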